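/- Let n ≥ 1 and let sl(n,ℂ) = {X ∈ M_n(ℂ) : Tr X = 0} be the special linear Lie algebra. Then for every A ∈ sl(n,ℂ) there exist X, Y ∈ sl(n,ℂ) such that X·Y − Y·X = A. -/

import Mathlib

open Matrix

section Aux

variable {k : ℕ}

/-- Transvection as a unit of the matrix ring. -/
noncomputable def tUnit (i j : Fin k) (hij : i ≠ j) (c : ℂ) : (Matrix (Fin k) (Fin k) ℂ)ˣ :=
  ⟨transvection i j c, transvection i j (-c),
   by rw [transvection_mul_transvection_same _ _ hij]; simp [transvection],
   by rw [transvection_mul_transvection_same _ _ hij]; simp [transvection]⟩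

lemma tUnit_val (i j : Fin k) (hij : i ≠ j) (c : ℂ) :
    (tUnit i j hij c).val = transvection i j c := rfl

lemma tUnit_inv_val (i j : Fin k) (hij : i ≠ j) (c : ℂ) :
    ((tUnit i j hij c)⁻¹).val = transvection i j (-c) := rfl

lemma stdBasisMatrix_neg' (i j : Fin k) (c : ℂ) :
    single i j (-c) = -single i j c := by
  have := Matrix.smul_single (-1 : ℂ) i j c
  simpa using this.symm

lemma conj_expand (i j : Fin k) (c : ℂ) (A : Matrix (Fin k) (Fin k) ℂ) :
    transvection i j c * A * transvection i j (-c) =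
      A + single i j c * A - A * single i j c
        - single i j c * A * single i j c := by
  simp only [transvection, stdBasisMatrix_neg']
  noncomm_ring

end Aux

section Zero00

variable {k : ℕ}

lemma entry00_row (A : Matrix (Fin (k + 1)) (Fin (k + 1)) ℂ) (i : Fin (k + 1)) (hi : i ≠ 0)
    (c : ℂ) :
    (transvection 0 i c * A * transvection 0 i (-c)) 0 0 = A 0 0 + c * A i 0 := by
  have h0i : (0 : Fin (k + 1)) ≠ i := Ne.symm hi
  rw [conj_expand]
  simp [h0i, Matrix.single_apply, hi]

lemma entry00_col (A : Matrix (Fin (k + 1)) (Fin (k + 1)) ℂ) (i : Fin (k + 1)) (hi : i ≠ 0)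
    (c : ℂ) :
    (transvection i 0 c * A * transvection i 0 (-c)) 0 0 = A 0 0 - A 0 i * c := by
  have h0i : (0 : Fin (k + 1)) ≠ i := Ne.symm hi
  rw [conj_expand]
  simp [h0i, Matrix.single_apply, hi]

lemma exists_conj_col (A : Matrix (Fin (k + 1)) (Fin (k + 1)) ℂ) (j : Fin (k + 1))
    (hj : j ≠ 0) (h : A 0 j ≠ 0) :
    ∃ P : (Matrix (Fin (k + 1)) (Fin (k + 1)) ℂ)ˣ, (P.val * A * (P⁻¹).val) 0 0 = 0 := by
  refine ⟨tUnit j 0 hj (A 0 0 / A 0 j), ?_⟩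
  rw [tUnit_val, tUnit_inv_val, entry00_col A j hj]
  field_simp
  ring

lemma exists_conj_entry00 (A : Matrix (Fin (k + 1)) (Fin (k + 1)) ℂ) (hA : A.trace = 0) :
    ∃ P : (Matrix (Fin (k + 1)) (Fin (k + 1)) ℂ)ˣ, (P.val * A * (P⁻¹).val) 0 0 = 0 := by
  by_cases h0 : A 0 0 = 0
  · exact ⟨1, by simpa⟩
  by_cases hrow : ∃ i, i ≠ 0 ∧ A i 0 ≠ 0
  · obtain ⟨i, hi, hAi⟩ := hrow
    refine ⟨tUnit 0 i (Ne.symm hi) (-(A 0 0) / A i 0), ?_⟩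
    rw [tUnit_val, tUnit_inv_val, entry00_row A i hi]
    field_simp
    ring
  by_cases hcol : ∃ i, i ≠ 0 ∧ A 0 i ≠ 0
  · obtain ⟨i, hi, hAi⟩ := hcol
    exact exists_conj_col A i hi hAi
  push_neg at hrow hcol
  have hdiag : ∃ j, j ≠ 0 ∧ A j j ≠ A 0 0 := by
    by_contra hcon
    push_neg at hcon
    have htr : A.trace = (k + 1 : ℕ) • A 0 0 := by
      rw [Matrix.trace]
      rw [Finset.sum_congr rfl (g := fun _ => A 0 0) (fun i _ => by
        rcases eq_or_ne i 0 with h | h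
        · rw [h]; rfl
        · exact hcon i h)]
      simp
    rw [hA] at htr
    refine h0 ?_
    have h1 : ((k + 1 : ℕ) : ℂ) ≠ 0 := by exact_mod_cast Nat.succ_ne_zero k
    have := htr.symm
    rw [nsmul_eq_mul] at this
    exact (mul_eq_zero.mp this).resolve_left h1
  obtain ⟨j, hj, hAj⟩ := hdiag
  set A' := transvection 0 j 1 * A * transvection 0 j (-1) with hA'
  have h0j : (0 : Fin (k + 1)) ≠ j := Ne.symm hj
  have hA'0j : A' 0 j ≠ 0 := by
    rw [hA', conj_expand]
    simp only [Matrix.sub_apply, Matrix.add_apply,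
      Matrix.single_mul_apply_same, Matrix.mul_single_apply_same,
      one_mul, mul_one, hrow j hj, hcol j hj]
    intro hcontra
    exact hAj (by linear_combination hcontra)
  obtain ⟨P', hP'⟩ := exists_conj_col A' j hj hA'0j
  refine ⟨P' * tUnit 0 j h0j 1, ?_⟩
  rw [_root_.mul_inv_rev, Units.val_mul, Units.val_mul, tUnit_val, tUnit_inv_val]
  have heq : (P'.val * transvection 0 j 1) * A * (transvection 0 j (-1) * (P'⁻¹).val)
      = P'.val * A' * (P'⁻¹).val := by
    rw [hA']; noncomm_ring
  rw [heq]
  exact hP'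

end Zero00

section Diag

lemma exists_conj_diag_zero :
    ∀ (k : ℕ) (A : Matrix (Fin k) (Fin k) ℂ), A.trace = 0 →
      ∃ P : (Matrix (Fin k) (Fin k) ℂ)ˣ, ∀ i, (P.val * A * (P⁻¹).val) i i = 0 := by
  intro k
  induction k with
  | zero => exact fun A _ => ⟨1, fun i => i.elim0⟩
  | succ n IH =>
    intro A hA
    obtain ⟨P₀, hP₀⟩ := exists_conj_entry00 A hA
    set A' := P₀.val * A * (P₀⁻¹).val with hA'def
    have htr' : A'.trace = 0 := by
      rw [hA'def, Matrix.trace_units_conj]; exact hA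
    set e : Fin (n + 1) ≃ Fin 1 ⊕ Fin n :=
      (finCongr (Nat.add_comm n 1)).trans finSumFinEquiv.symm with he
    have he1 : e.symm (Sum.inl 0) = 0 := by
      simp [he, Fin.ext_iff]
    have he2 : ∀ i : Fin n, e.symm (Sum.inr i) = i.succ := by
      intro i
      simp [he, Fin.ext_iff, Nat.add_comm]
    set M : Matrix (Fin 1 ⊕ Fin n) (Fin 1 ⊕ Fin n) ℂ := A'.submatrix e.symm e.symm with hM
    have hM11 : M (Sum.inl 0) (Sum.inl 0) = 0 := by
      rw [hM, Matrix.submatrix_apply, he1]; exact hP₀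
    set B := M.toBlocks₂₂ with hB
    have hBij : ∀ i j : Fin n, B i j = A' i.succ j.succ := by
      intro i j
      rw [hB, hM]
      simp [Matrix.toBlocks₂₂, he2]
    have hsum : A'.trace = A' 0 0 + ∑ i : Fin n, A' i.succ i.succ := by
      rw [Matrix.trace]; exact Fin.sum_univ_succ _
    have hA'00 : A' 0 0 = 0 := hP₀
    have htrB : B.trace = 0 := by
      rw [Matrix.trace]
      calc ∑ i, B.diag i = ∑ i : Fin n, A' i.succ i.succ :=
            Finset.sum_congr rfl (fun i _ => hBij i i)
        _ = 0 := by
            have := hsum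
            rw [htr', hA'00] at this
            linear_combination -this
    obtain ⟨Q, hQ⟩ := IH B htrB
    have hmul : fromBlocks (1 : Matrix (Fin 1) (Fin 1) ℂ) 0 0 Q.val *
        fromBlocks 1 0 0 Q.inv = 1 := by
      rw [Matrix.fromBlocks_multiply]
      have h : Q.val * Q.inv = 1 := Q.val_inv
      simp only [Matrix.mul_one, Matrix.one_mul, Matrix.mul_zero, Matrix.zero_mul,
        add_zero, zero_add, h, Matrix.fromBlocks_one]
    have hmul' : fromBlocks (1 : Matrix (Fin 1) (Fin 1) ℂ) 0 0 Q.inv *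
        fromBlocks 1 0 0 Q.val = 1 := by
      rw [Matrix.fromBlocks_multiply]
      have h : Q.inv * Q.val = 1 := Q.inv_val
      simp only [Matrix.mul_one, Matrix.one_mul, Matrix.mul_zero, Matrix.zero_mul,
        add_zero, zero_add, h, Matrix.fromBlocks_one]
    set Qb : (Matrix (Fin 1 ⊕ Fin n) (Fin 1 ⊕ Fin n) ℂ)ˣ :=
      ⟨fromBlocks 1 0 0 Q.val, fromBlocks 1 0 0 Q.inv, hmul, hmul'⟩ with hQb
    have key : ∀ x, (Qb.val * M * (Qb⁻¹).val) x x = 0 := by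
      have hconj : Qb.val * M * (Qb⁻¹).val =
          fromBlocks M.toBlocks₁₁ (M.toBlocks₁₂ * Q.inv) (Q.val * M.toBlocks₂₁)
            (Q.val * B * (Q⁻¹).val) := by
        conv_lhs => rw [← Matrix.fromBlocks_toBlocks M]
        rw [show Qb.val = fromBlocks 1 0 0 Q.val from rfl,
          show (Qb⁻¹).val = fromBlocks 1 0 0 Q.inv from rfl,
          Matrix.fromBlocks_multiply, Matrix.fromBlocks_multiply]
        simp [Matrix.mul_assoc, hB]
      intro x
      rw [hconj]
      rcases x with x | x
      · have hx : x = 0 := Subsingleton.elim x 0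
        rw [hx, Matrix.fromBlocks_apply₁₁]
        exact hM11
      · rw [Matrix.fromBlocks_apply₂₂]
        exact hQ x
    have hRval_inv : Qb.val.submatrix e e * Qb.inv.submatrix e e = 1 := by
      rw [Matrix.submatrix_mul_equiv, Qb.val_inv]
      exact Matrix.submatrix_one_equiv e
    have hRinv_val : Qb.inv.submatrix e e * Qb.val.submatrix e e = 1 := by
      rw [Matrix.submatrix_mul_equiv, Qb.inv_val]
      exact Matrix.submatrix_one_equiv e
    set R : (Matrix (Fin (n + 1)) (Fin (n + 1)) ℂ)ˣ :=
      ⟨Qb.val.submatrix e e, Qb.inv.submatrix e e, hRval_inv, hRinv_val⟩ with hR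
    refine ⟨R * P₀, fun i => ?_⟩
    rw [_root_.mul_inv_rev, Units.val_mul, Units.val_mul]
    have hAM : A' = M.submatrix e e := by
      rw [hM, Matrix.submatrix_submatrix]
      simp [Equiv.symm_comp_self]
    have hprod : R.val * P₀.val * A * ((P₀⁻¹).val * (R⁻¹).val)
        = R.val * A' * (R⁻¹).val := by
      rw [hA'def]; noncomm_ring
    have hfin : R.val * A' * (R⁻¹).val = (Qb.val * M * (Qb⁻¹).val).submatrix e e := by
      rw [show R.val = Qb.val.submatrix e e from rfl,
        show (R⁻¹).val = Qb.inv.submatrix e e from rfl, hAM,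
        show (Qb⁻¹).val = Qb.inv from rfl,
        Matrix.submatrix_mul_equiv, Matrix.submatrix_mul_equiv]
    rw [hprod, hfin, Matrix.submatrix_apply]
    exact key (e i)

end Diag

section Comm

lemma zero_diag_comm (k : ℕ) (hk : 1 ≤ k) (B : Matrix (Fin k) (Fin k) ℂ)
    (hB : ∀ i, B i i = 0) :
    ∃ X Y : Matrix (Fin k) (Fin k) ℂ,
      X.trace = 0 ∧ Y.trace = 0 ∧ X * Y - Y * X = B := by
  have hk0 : ((k : ℕ) : ℂ) ≠ 0 := by
    exact_mod_cast Nat.one_le_iff_ne_zero.mp hk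
  set s : ℂ := (∑ i : Fin k, ((i : ℕ) : ℂ)) / k with hs
  refine ⟨Matrix.diagonal (fun i => ((i : ℕ) : ℂ) - s),
    Matrix.of (fun i j => if i = j then 0 else B i j / (((i : ℕ) : ℂ) - ((j : ℕ) : ℂ))),
    ?_, ?_, ?_⟩
  · rw [Matrix.trace_diagonal]
    rw [Finset.sum_sub_distrib]
    rw [Finset.sum_const, hs]
    simp only [Finset.card_univ, Fintype.card_fin, nsmul_eq_mul]
    field_simp
    ring
  · rw [Matrix.trace]
    apply Finset.sum_eq_zero
    intro i _
    simp [Matrix.diag]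
  · ext i j
    rw [Matrix.sub_apply, Matrix.diagonal_mul, Matrix.mul_diagonal]
    rcases eq_or_ne i j with h | h
    · subst h
      simp [hB i]
    · have hij : ((i : ℕ) : ℂ) ≠ ((j : ℕ) : ℂ) := by
        exact_mod_cast fun hc => h (Fin.ext hc)
      simp only [Matrix.of_apply, h, if_neg h, ↓reduceIte]
      have hne : ((i : ℕ) : ℂ) - ((j : ℕ) : ℂ) ≠ 0 := sub_ne_zero.mpr hij
      field_simp
      ring

end Comm

theorem stmt_14 (n : ℕ) (hn : 1 ≤ n) (A : Matrix (Fin n) (Fin n) ℂ)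
    (hA : A.trace = 0) :
    ∃ X Y : Matrix (Fin n) (Fin n) ℂ,
      X.trace = 0 ∧ Y.trace = 0 ∧ X * Y - Y * X = A := by
  obtain ⟨P, hP⟩ := exists_conj_diag_zero n A hA
  obtain ⟨X, Y, hX, hY, hXY⟩ := zero_diag_comm n hn (P.val * A * (P⁻¹).val) hP
  refine ⟨(P⁻¹).val * X * P.val, (P⁻¹).val * Y * P.val, ?_, ?_, ?_⟩
  · rw [Matrix.trace_units_conj']; exact hX
  · rw [Matrix.trace_units_conj']; exact hY
  · have h1 : ((P⁻¹).val * X * P.val) * ((P⁻¹).val * Y * P.val)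
        = (P⁻¹).val * (X * Y) * P.val := by
      calc (P⁻¹).val * X * P.val * ((P⁻¹).val * Y * P.val)
          = (P⁻¹).val * X * (P.val * (P⁻¹).val) * Y * P.val := by noncomm_ring
        _ = (P⁻¹).val * (X * Y) * P.val := by rw [P.mul_inv]; noncomm_ring
    have h2 : ((P⁻¹).val * Y * P.val) * ((P⁻¹).val * X * P.val)
        = (P⁻¹).val * (Y * X) * P.val := by
      calc (P⁻¹).val * Y * P.val * ((P⁻¹).val * X * P.val)
          = (P⁻¹).val * Y * (P.val * (P⁻¹).val) * X * P.val := by noncomm_ring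
        _ = (P⁻¹).val * (Y * X) * P.val := by rw [P.mul_inv]; noncomm_ring
    rw [h1, h2]
    have h3 : (P⁻¹).val * (X * Y) * P.val - (P⁻¹).val * (Y * X) * P.val
        = (P⁻¹).val * (X * Y - Y * X) * P.val := by noncomm_ring
    rw [h3, hXY]
    calc (P⁻¹).val * (P.val * A * (P⁻¹).val) * P.val
        = ((P⁻¹).val * P.val) * A * ((P⁻¹).val * P.val) := by noncomm_ring
      _ = A := by rw [P.inv_mul]; noncomm_ring
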